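/- (Lemma 3.1(i)) Given two admissible 2D primitive states U⁻ and U⁺ (resolved along a common normal direction) with the HLLC wave speeds s⁻ = min(s_min(U⁻), s_min(U⁺)) and s⁺ = max(s_max(U⁻), s_max(U⁺)), the quantities A⁻ = s⁻E⁻ - m_n⁻ and A⁺ = s⁺E⁺ - m_n⁺ satisfy A⁻ < 0 and A⁺ > 0. -/

import Mathlib

set_option maxHeartbeats 1000000


noncomputable section

namespace SRHD2D

/-- Lorentz factor `γ = (1 - u_n² - u_τ²)^(-1/2)`. -/
def lorentz (un ut : ℝ) : ℝ := 1 / Real.sqrt (1 - un ^ 2 - ut ^ 2)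

/-- Specific enthalpy `h = 1 + Γ p / ((Γ - 1) ρ)` of a perfect gas. -/
def enthalpy (G r p : ℝ) : ℝ := 1 + G * p / ((G - 1) * r)

/-- Sound speed `c_s = √(Γ p / (ρ h))`. -/
def soundSpeed (G r p : ℝ) : ℝ := Real.sqrt (G * p / (r * enthalpy G r p))

/-- Conserved rest-mass density `D = ρ γ`. -/
def Dc (r un ut : ℝ) : ℝ := r * lorentz un ut

/-- Normal momentum `m_n = ρ h γ² u_n`. -/
def mn (G r un ut p : ℝ) : ℝ := r * enthalpy G r p * lorentz un ut ^ 2 * un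

/-- Tangential momentum `m_τ = ρ h γ² u_τ`. -/
def mt (G r un ut p : ℝ) : ℝ := r * enthalpy G r p * lorentz un ut ^ 2 * ut

/-- Conserved total energy `E = ρ h γ² - p`. -/
def Ec (G r un ut p : ℝ) : ℝ := r * enthalpy G r p * lorentz un ut ^ 2 - p

/-- `σ_s = c_s² / (γ² (1 - c_s²))`. -/
def sigmaS (G r un ut p : ℝ) : ℝ :=
  soundSpeed G r p ^ 2 / (lorentz un ut ^ 2 * (1 - soundSpeed G r p ^ 2))

/-- Minimum normal characteristic speed. -/
def sMin (G r un ut p : ℝ) : ℝ :=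
  (un - Real.sqrt (sigmaS G r un ut p * (1 - un ^ 2 + sigmaS G r un ut p))) /
    (1 + sigmaS G r un ut p)

/-- Maximum normal characteristic speed. -/
def sMax (G r un ut p : ℝ) : ℝ :=
  (un + Real.sqrt (sigmaS G r un ut p * (1 - un ^ 2 + sigmaS G r un ut p))) /
    (1 + sigmaS G r un ut p)

lemma key (G r un ut p : ℝ) (hG1 : 1 < G) (hG2 : G ≤ 2)
    (hr : 0 < r) (hu : un ^ 2 + ut ^ 2 < 1) (hp : 0 < p) :
    0 < Ec G r un ut p ∧
      sMin G r un ut p * Ec G r un ut p < mn G r un ut p ∧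
      mn G r un ut p < sMax G r un ut p * Ec G r un ut p := by
  have hG0 : (0:ℝ) < G - 1 := by linarith
  have hGpos : (0:ℝ) < G := by linarith
  have hd : 0 < 1 - un ^ 2 - ut ^ 2 := by nlinarith [sq_nonneg un, sq_nonneg ut]
  set d : ℝ := 1 - un ^ 2 - ut ^ 2 with hd_def
  have hd1 : d ≤ 1 := by nlinarith [sq_nonneg un, sq_nonneg ut]
  have hγ2 : lorentz un ut ^ 2 = 1 / d := by
    rw [lorentz, div_pow, one_pow, Real.sq_sqrt hd.le]
  set W : ℝ := r + G * p / (G - 1) with hW_def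
  have hWpos : 0 < W := by positivity
  have hrh : r * enthalpy G r p = W := by
    rw [enthalpy, hW_def]; field_simp
  have ht : 0 < (G - 1) * W - G * p := by
    have h1 : (G - 1) * W - G * p = (G - 1) * r := by rw [hW_def]; field_simp; ring
    rw [h1]; exact mul_pos hG0 hr
  have hK : 0 < W - G * p := by nlinarith
  have hc2 : soundSpeed G r p ^ 2 = G * p / W := by
    rw [soundSpeed, Real.sq_sqrt, hrh]
    rw [hrh]
    exact div_nonneg (by positivity) hWpos.le
  have hσ : sigmaS G r un ut p = G * p * d / (W - G * p) := by
    rw [sigmaS, hγ2, hc2]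
    rw [div_eq_div_iff]
    · field_simp
    · have h1 : 1 - G * p / W = (W - G * p) / W := by field_simp
      rw [h1]
      positivity
    · exact ne_of_gt hK
  have hσpos : 0 < sigmaS G r un ut p := by
    rw [hσ]; exact div_pos (by positivity) hK
  have hQ : 0 < sigmaS G r un ut p * (1 - un ^ 2 + sigmaS G r un ut p) := by
    have h1 : 0 < 1 - un ^ 2 := by nlinarith [sq_nonneg ut]
    exact mul_pos hσpos (by linarith)
  set sq : ℝ := Real.sqrt (sigmaS G r un ut p * (1 - un ^ 2 + sigmaS G r un ut p)) with hsq_def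
  have hsq2 : sq ^ 2 = sigmaS G r un ut p * (1 - un ^ 2 + sigmaS G r un ut p) :=
    Real.sq_sqrt hQ.le
  have hsqpos : 0 < sq := Real.sqrt_pos.mpr hQ
  have hE : Ec G r un ut p = W / d - p := by
    rw [Ec, hγ2, hrh]; ring
  have hm : mn G r un ut p = W / d * un := by
    rw [mn, hγ2, hrh]; ring
  have hwp : 0 < W / d - p := by
    rw [sub_pos, lt_div_iff₀ hd]
    nlinarith
  have hEpos : 0 < Ec G r un ut p := by rw [hE]; exact hwp
  -- the algebraic core
  have ha : 0 ≤ G * W ^ 3 - p * ((W - G * p) + G * W) ^ 2 := by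
    have ida : G * (G * W ^ 3 - p * ((W - G * p) + G * W) ^ 2) =
        (2 - G) ^ 2 * W ^ 3 + 4 * (2 - G) * W ^ 2 * ((G - 1) * W - G * p) +
          (5 - G) * W * ((G - 1) * W - G * p) ^ 2 + ((G - 1) * W - G * p) ^ 3 := by ring
    have h2G : (0:ℝ) ≤ 2 - G := by linarith
    have h5G : (0:ℝ) < 5 - G := by linarith
    have hrhs : 0 ≤ G * (G * W ^ 3 - p * ((W - G * p) + G * W) ^ 2) := by
      rw [ida]
      have t1 : 0 ≤ (2 - G) ^ 2 * W ^ 3 := by positivity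
      have t2 : 0 ≤ 4 * (2 - G) * W ^ 2 * ((G - 1) * W - G * p) := by
        apply mul_nonneg (by positivity) ht.le
      have t3 : 0 ≤ (5 - G) * W * ((G - 1) * W - G * p) ^ 2 := by positivity
      have t4 : 0 ≤ ((G - 1) * W - G * p) ^ 3 := by positivity
      linarith
    exact le_of_mul_le_mul_left (by simpa using hrhs) hGpos
  have hb : 0 ≤ ((W - G * p) + G * W) ^ 2 - 2 * G * W ^ 2 := by
    have h2G : (0:ℝ) ≤ 2 - G := by linarith
    have t1 : 0 ≤ 2 * (2 - G) * W ^ 2 := by positivity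
    have t2 : 0 ≤ 4 * W * ((G - 1) * W - G * p) := by positivity
    nlinarith [sq_nonneg ((G - 1) * W - G * p)]
  have hbase : 0 < G * W * (W - p * d) ^ 2 - (1 - d) * p * ((W - G * p) + G * W) ^ 2 := by
    have h2 : 0 ≤ p * d * (((W - G * p) + G * W) ^ 2 - 2 * G * W ^ 2) := by
      apply mul_nonneg (by positivity) hb
    have h3 : 0 < G * W * p ^ 2 * d ^ 2 := by positivity
    linarith [ha, h2, h3]
  have hut : (0:ℝ) ≤ ut ^ 2 := sq_nonneg ut
  have hun2 : un ^ 2 = 1 - d - ut ^ 2 := by rw [hd_def]; ring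
  have hcore : (1 - d - ut ^ 2) * p * d * ((W - G * p) + G * W) ^ 2 <
      G * ((W - G * p) * (d + ut ^ 2) + G * p * d) * (W - p * d) ^ 2 := by
    have h1 : 0 < d * (G * W * (W - p * d) ^ 2 - (1 - d) * p * ((W - G * p) + G * W) ^ 2) :=
      mul_pos hd hbase
    have h2 : 0 ≤ ut ^ 2 * (G * (W - G * p) * (W - p * d) ^ 2 +
        p * d * ((W - G * p) + G * W) ^ 2) := by
      apply mul_nonneg hut
      have e1 : 0 ≤ G * (W - G * p) * (W - p * d) ^ 2 := by positivity
      have e2 : 0 ≤ p * d * ((W - G * p) + G * W) ^ 2 := by positivity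
      linarith
    linarith [h1, h2]
  have hpsw : 0 < p + sigmaS G r un ut p * (W / d) := by
    have h1 : 0 < sigmaS G r un ut p * (W / d) := mul_pos hσpos (by positivity)
    linarith
  have e1 : un ^ 2 * (p + sigmaS G r un ut p * (W / d)) ^ 2 =
      ((1 - d - ut ^ 2) * p * d * ((W - G * p) + G * W) ^ 2) * (p / ((W - G * p) ^ 2 * d)) := by
    rw [hσ, hun2]
    have hKne : (W - G * p) ≠ 0 := ne_of_gt hK
    have hdne : d ≠ 0 := ne_of_gt hd
    rw [div_mul_div_comm, add_div' _ _ _ (mul_ne_zero hKne hdne), div_pow, mul_div_assoc', mul_div_assoc', div_eq_div_iff (by positivity) (by positivity)]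
    ring
  have e2 : sq ^ 2 * (W / d - p) ^ 2 =
      (G * ((W - G * p) * (d + ut ^ 2) + G * p * d) * (W - p * d) ^ 2) *
        (p / ((W - G * p) ^ 2 * d)) := by
    rw [hsq2, hσ, hun2]
    have hKne : (W - G * p) ≠ 0 := ne_of_gt hK
    have hdne : d ≠ 0 := ne_of_gt hd
    field_simp
    ring
  have hsqlt : un ^ 2 * (p + sigmaS G r un ut p * (W / d)) ^ 2 <
      sq ^ 2 * (W / d - p) ^ 2 := by
    rw [e1, e2]
    have hpos : 0 < p / ((W - G * p) ^ 2 * d) := by positivity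
    exact mul_lt_mul_of_pos_right hcore hpos
  have habs : |un| * (p + sigmaS G r un ut p * (W / d)) < sq * (W / d - p) := by
    have hL : 0 ≤ sq * (W / d - p) := by positivity
    apply lt_of_pow_lt_pow_left₀ 2 hL
    calc (|un| * (p + sigmaS G r un ut p * (W / d))) ^ 2
        = un ^ 2 * (p + sigmaS G r un ut p * (W / d)) ^ 2 := by
          rw [mul_pow, sq_abs]
      _ < sq ^ 2 * (W / d - p) ^ 2 := hsqlt
      _ = (sq * (W / d - p)) ^ 2 := by rw [mul_pow]
  have hσ1 : 0 < 1 + sigmaS G r un ut p := by linarith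
  have hneg : -|un| * (p + sigmaS G r un ut p * (W / d)) ≤
      un * (p + sigmaS G r un ut p * (W / d)) :=
    mul_le_mul_of_nonneg_right (neg_abs_le un) hpsw.le
  have hposb : un * (p + sigmaS G r un ut p * (W / d)) ≤
      |un| * (p + sigmaS G r un ut p * (W / d)) :=
    mul_le_mul_of_nonneg_right (le_abs_self un) hpsw.le
  refine ⟨hEpos, ?_, ?_⟩
  · rw [sMin, hE, hm, div_mul_eq_mul_div, div_lt_iff₀ hσ1]
    linarith [habs, hneg]
  · rw [sMax, hE, hm, ← hsq_def,
      div_mul_eq_mul_div (un + sq) (1 + sigmaS G r un ut p) (W / d - p), lt_div_iff₀ hσ1]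
    linarith [habs, hposb]


theorem hllc2d_A_sign (G r1 un1 ut1 p1 r2 un2 ut2 p2 sm sp A1 A2 B1 B2 : ℝ)
    (hG1 : 1 < G) (hG2 : G ≤ 2)
    (hr1 : 0 < r1) (hu1 : un1 ^ 2 + ut1 ^ 2 < 1) (hp1 : 0 < p1)
    (hr2 : 0 < r2) (hu2 : un2 ^ 2 + ut2 ^ 2 < 1) (hp2 : 0 < p2)
    (hsm : sm = min (sMin G r1 un1 ut1 p1) (sMin G r2 un2 ut2 p2))
    (hsp : sp = max (sMax G r1 un1 ut1 p1) (sMax G r2 un2 ut2 p2))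
    (hA1 : A1 = sm * Ec G r1 un1 ut1 p1 - mn G r1 un1 ut1 p1)
    (hA2 : A2 = sp * Ec G r2 un2 ut2 p2 - mn G r2 un2 ut2 p2)
    (hB1 : B1 = mn G r1 un1 ut1 p1 * (sm - un1) - p1)
    (hB2 : B2 = mn G r2 un2 ut2 p2 * (sp - un2) - p2)
    :
    A1 < 0 ∧ 0 < A2 := by
  obtain ⟨hE1, hk1, -⟩ := key G r1 un1 ut1 p1 hG1 hG2 hr1 hu1 hp1
  obtain ⟨hE2, -, hk2⟩ := key G r2 un2 ut2 p2 hG1 hG2 hr2 hu2 hp2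
  constructor
  · have h1 : sm ≤ sMin G r1 un1 ut1 p1 := hsm ▸ min_le_left _ _
    have h2 : sm * Ec G r1 un1 ut1 p1 ≤ sMin G r1 un1 ut1 p1 * Ec G r1 un1 ut1 p1 :=
      mul_le_mul_of_nonneg_right h1 hE1.le
    rw [hA1]; linarith
  · have h1 : sMax G r2 un2 ut2 p2 ≤ sp := hsp ▸ le_max_right _ _
    have h2 : sMax G r2 un2 ut2 p2 * Ec G r2 un2 ut2 p2 ≤ sp * Ec G r2 un2 ut2 p2 :=
      mul_le_mul_of_nonneg_right h1 hE2.le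
    rw [hA2]; linarith

end SRHD2D
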